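/- arXiv:1106.0191 — 3 statements merged into one kernel-verified Lean document; each statement's English description precedes it below -/
import Mathlib

section
/- The Stone–Čech compactification βℕ of the natural numbers (with the discrete topology) is not a sequential space: there exists a sequentially open subset of βℕ that is not open. -/
open Filter Topology

/-- A set is sequentially open if every sequence converging to a point of the set
is eventually in the set. -/
def SeqOpen {X : Type*} [TopologicalSpace X] (A : Set X) : Prop :=
  ∀ ⦃x⦄, x ∈ A → ∀ u : ℕ → X, Tendsto u atTop (𝓝 x) → ∀ᶠ n in atTop, u n ∈ A

/-- The sequential saturation of a topology: its open sets are the sequentially open sets. -/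
def seqSaturation {X : Type*} (τ : TopologicalSpace X) : TopologicalSpace X where
  IsOpen A := @SeqOpen X τ A
  isOpen_univ := fun _ _ u _ => Filter.Eventually.of_forall fun n => Set.mem_univ (u n)
  isOpen_inter := fun _ _ hs ht _ hx u hu => (hs hx.1 u hu).and (ht hx.2 u hu)
  isOpen_sUnion := fun _ hS _ hx u hu => by
    obtain ⟨s, hsS, hxs⟩ := hx
    exact (hS s hsS hxs u hu).mono fun n hn => ⟨s, hsS, hn⟩

section ED
open Set
variable {X : Type*} [TopologicalSpace X] [T2Space X] [ExtremallyDisconnected X]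

lemma exists_clopen_sep {x y : X} (h : y ≠ x) :
    ∃ C : Set X, IsClopen C ∧ y ∈ C ∧ x ∉ C := by
  obtain ⟨U, V, hU, hV, hyU, hxV, hcov, hdisj⟩ :=
    TotallySeparatedSpace.isTotallySeparated_univ (mem_univ y) (mem_univ x) h
  have hUc : U = Vᶜ := by
    apply Set.Subset.antisymm (Set.disjoint_left.mp hdisj)
    intro z hz
    rcases hcov (mem_univ z) with h1 | h1
    · exact h1
    · exact absurd h1 hz
  exact ⟨U, ⟨hUc ▸ hV.isClosed_compl, hU⟩, hyU, fun hx => hdisj.le_bot ⟨hx, hxV⟩⟩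

theorem eventually_eq_of_tendsto_ED {u : ℕ → X} {x : X}
    (hu : Tendsto u atTop (𝓝 x)) : ∀ᶠ n in atTop, u n = x := by
  by_contra hne
  have hfreq : ∃ᶠ n in atTop, u n ≠ x := not_eventually.mp hne
  have hsep : ∀ y : X, ∃ C : Set X, IsClopen C ∧ x ∉ C ∧ (y ≠ x → y ∈ C) := by
    intro y
    by_cases h : y ≠ x
    · obtain ⟨C, h1, h2, h3⟩ := exists_clopen_sep h
      exact ⟨C, h1, h3, fun _ => h2⟩
    · exact ⟨∅, isClopen_empty, notMem_empty x, fun h' => absurd h' h⟩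
  choose V hVc hVx hVmem using hsep
  have key : ∀ k : ℕ, ∀ s : Finset ℕ, ∃ m, m > k ∧ u m ≠ x ∧ ∀ j ∈ s, u m ∉ V (u j) := by
    intro k s
    have hW : IsClopen (⋃ j ∈ s, V (u j)) :=
      Set.Finite.isClopen_biUnion s.finite_toSet (fun j _ => hVc _)
    have hxW : x ∈ (⋃ j ∈ s, V (u j))ᶜ := by
      simp only [mem_compl_iff, mem_iUnion, not_exists]
      exact fun j _ => hVx _
    have hev : ∀ᶠ m in atTop, u m ∈ (⋃ j ∈ s, V (u j))ᶜ :=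
      hu (hW.compl.isOpen.mem_nhds hxW)
    obtain ⟨m, h1, h2, h3⟩ :=
      (hfreq.and_eventually (hev.and (eventually_gt_atTop k))).exists
    simp only [mem_compl_iff, mem_iUnion, not_exists] at h2
    exact ⟨m, h3, h1, fun j hj => h2 j hj⟩
  -- state recursion: (last index, set of chosen indices)
  let G : ℕ → ℕ × Finset ℕ := fun k => Nat.rec
    (let m := Classical.choose (key 0 ∅); (m, {m}))
    (fun _ p => let m := Classical.choose (key p.1 p.2); (m, insert m p.2)) k
  let F : ℕ → ℕ := fun k => (G k).1
  have hGsucc : ∀ k, G (k+1) =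
      (Classical.choose (key (G k).1 (G k).2),
        insert (Classical.choose (key (G k).1 (G k).2)) (G k).2) := fun _ => rfl
  have hFmem : ∀ k, ∀ j ≤ k, F j ∈ (G k).2 := by
    intro k
    induction k with
    | zero =>
        intro j hj
        have : j = 0 := Nat.le_zero.mp hj
        subst this
        exact Finset.mem_singleton_self _
    | succ k ih =>
        intro j hj
        rcases Nat.le_succ_iff.mp hj with h | h
        · rw [hGsucc]; exact Finset.mem_insert_of_mem (ih j h)
        · subst h; rw [hGsucc]; exact Finset.mem_insert_self _ _
  have hFspec : ∀ k, F (k+1) > (G k).1 ∧ u (F (k+1)) ≠ x ∧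
      ∀ j ∈ (G k).2, u (F (k+1)) ∉ V (u j) := by
    intro k
    exact Classical.choose_spec (key (G k).1 (G k).2)
  have hF0 : u (F 0) ≠ x := (Classical.choose_spec (key 0 ∅)).2.1
  have hFne : ∀ k, u (F k) ≠ x := by
    intro k
    cases k with
    | zero => exact hF0
    | succ k => exact (hFspec k).2.1
  have hFmono : StrictMono F := strictMono_nat_of_lt_succ fun k => (hFspec k).1
  have hdisjV : ∀ j k, j < k → u (F k) ∉ V (u (F j)) := by
    intro j k hjk
    obtain ⟨m, rfl⟩ : ∃ m, k = m + 1 := ⟨k - 1, by omega⟩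
    exact (hFspec m).2.2 _ (hFmem m j (by omega))
  -- the pairwise disjoint open sets
  set C : ℕ → Set X := fun k => V (u (F k)) \ ⋃ j ∈ Finset.range k, V (u (F j)) with hC
  have hCopen : ∀ k, IsOpen (C k) := by
    intro k
    exact (hVc _).isOpen.sdiff
      (Set.Finite.isClosed_biUnion (Finset.range k).finite_toSet fun j _ => (hVc _).isClosed)
  have hCmem : ∀ k, u (F k) ∈ C k := by
    intro k
    refine ⟨hVmem _ (hFne k), ?_⟩
    simp only [mem_iUnion, not_exists]
    intro j hj
    exact hdisjV j k (Finset.mem_range.mp hj)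
  have hCdisj : ∀ j k, j < k → Disjoint (C j) (C k) := by
    intro j k hjk
    refine Set.disjoint_left.mpr fun z hzj hzk => ?_
    exact hzk.2 (Set.mem_biUnion (Finset.mem_range.mpr hjk) hzj.1)
  -- even/odd unions
  set E : Set X := ⋃ k, C (2 * k) with hE
  set O : Set X := ⋃ k, C (2 * k + 1) with hO
  have hEopen : IsOpen E := isOpen_iUnion fun k => hCopen (2 * k)
  have hOopen : IsOpen O := isOpen_iUnion fun k => hCopen (2 * k + 1)
  have hEO : Disjoint E O := by
    refine Set.disjoint_left.mpr fun z hzE hzO => ?_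
    obtain ⟨a, ha⟩ := Set.mem_iUnion.mp hzE
    obtain ⟨b, hb⟩ := Set.mem_iUnion.mp hzO
    rcases Nat.lt_trichotomy (2 * a) (2 * b + 1) with h | h | h
    · exact Set.disjoint_left.mp (hCdisj _ _ h) ha hb
    · omega
    · exact Set.disjoint_left.mp (hCdisj _ _ h) hb ha
  have hxE : x ∈ closure E := by
    refine mem_closure_of_tendsto (hu.comp (hFmono.tendsto_atTop.comp
      (tendsto_atTop_mono (fun k => by omega : ∀ k, k ≤ 2 * k) tendsto_id))) ?_
    exact Eventually.of_forall fun k => Set.mem_iUnion.mpr ⟨k, hCmem (2 * k)⟩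
  have hxO : x ∈ closure O := by
    refine mem_closure_of_tendsto (hu.comp (hFmono.tendsto_atTop.comp
      (tendsto_atTop_mono (fun k => by omega : ∀ k, k ≤ 2 * k + 1) tendsto_id))) ?_
    exact Eventually.of_forall fun k => Set.mem_iUnion.mpr ⟨k, hCmem (2 * k + 1)⟩
  exact (ExtremallyDisconnected.disjoint_closure_of_disjoint_isOpen hEO hEopen hOopen).le_bot
    ⟨hxE, hxO⟩
end ED

lemma stoneCechUnitNat_injective : Function.Injective (stoneCechUnit : ℕ → StoneCech ℕ) := by
  intro a b hab
  have hf : Continuous (fun n : ℕ => decide (n = a)) := continuous_of_discreteTopology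
  have h := congrFun (stoneCechExtend_extends hf)
  have h2 := (h a).symm.trans (congrArg (stoneCechExtend hf) hab) |>.trans (h b)
  have : b = a := by simpa using h2
  exact this.symm

/-- The Stone–Čech compactification of `ℕ` is not a sequential space: there exists a
sequentially open subset of `βℕ` which is not open. -/
theorem stoneCech_nat_not_sequential :
    ∃ A : Set (StoneCech ℕ), SeqOpen A ∧ ¬ IsOpen A := by
  have hED : ExtremallyDisconnected (StoneCech ℕ) :=
    StoneCech.projective.extremallyDisconnected
  have hseq : ∀ A : Set (StoneCech ℕ), SeqOpen A := by
    intro A x hx u hu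
    exact (eventually_eq_of_tendsto_ED hu).mono fun n hn => hn ▸ hx
  by_contra h
  push_neg at h
  have hall : ∀ A : Set (StoneCech ℕ), IsOpen A := fun A => h A (hseq A)
  have : DiscreteTopology (StoneCech ℕ) := discreteTopology_iff_forall_isOpen.mpr hall
  have hfin : Finite (StoneCech ℕ) := finite_of_compact_of_discrete
  have : Infinite (StoneCech ℕ) := Infinite.of_injective _ stoneCechUnitNat_injective
  exact not_finite (StoneCech ℕ)
end

section
/- Let E be a field with a topology for which addition is continuous and multiplication by each fixed element is continuous. For each sequence {U_i}_{i∈ℤ} of open neighbourhoods of 0 in E with U_i = E for all sufficiently large i, let 𝒰 = { Σ_{i ≫ -∞} f_i t^i ∈ E((t)) : f_i ∈ U_i }. Then the collection of all such sets 𝒰 is a basis of neighbourhoods of 0 for a group topology on the additive group of the Laurent series field E((t)). -/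
open Filter Topology Pointwise

/-- Let `E` be a field with a topology for which addition is continuous and
multiplication by each fixed element is continuous. The sets
`𝒰 = { Σ f_i t^i : f_i ∈ U_i }`, for `{U_i}` a family of open neighbourhoods of `0` in
`E` with `U_i = E` for all sufficiently large `i`, form a basis of neighbourhoods of `0`
for a group topology on the additive group of the Laurent series field `E((t))`. -/
theorem laurentSeries_higher_group_topology (E : Type*) [Field E] [TopologicalSpace E]
    [ContinuousAdd E] (hmul : ∀ c : E, Continuous fun x : E => c * x) :
    ∃ τ : TopologicalSpace (LaurentSeries E),
      @IsTopologicalAddGroup (LaurentSeries E) τ _ ∧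
      (@nhds (LaurentSeries E) τ 0).HasBasis
        (fun U : ℤ → Set E =>
          (∀ i, IsOpen (U i) ∧ (0 : E) ∈ U i) ∧ ∃ i₀ : ℤ, ∀ i ≥ i₀, U i = Set.univ)
        (fun U => {f : LaurentSeries E | ∀ i, f.coeff i ∈ U i}) := by
  set P : (ℤ → Set E) → Prop := fun U =>
      (∀ i, IsOpen (U i) ∧ (0 : E) ∈ U i) ∧ ∃ i₀ : ℤ, ∀ i ≥ i₀, U i = Set.univ with hP
  set s : (ℤ → Set E) → Set (LaurentSeries E) :=
      fun U => {f : LaurentSeries E | ∀ i, f.coeff i ∈ U i} with hs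
  have hneg : Continuous fun x : E => -x := by
    simpa using hmul (-1)
  -- the collection of sets
  let B : AddGroupFilterBasis (LaurentSeries E) :=
  { sets := {t | ∃ U, P U ∧ t = s U}
    nonempty := ⟨s (fun _ => Set.univ), fun _ => Set.univ,
      ⟨fun _ => ⟨isOpen_univ, trivial⟩, 0, fun _ _ => rfl⟩, rfl⟩
    inter_sets := by
      rintro _ _ ⟨U, ⟨hU, i₀, hi₀⟩, rfl⟩ ⟨V, ⟨hV, j₀, hj₀⟩, rfl⟩
      refine ⟨s (fun i => U i ∩ V i), ⟨fun i => U i ∩ V i,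
        ⟨fun i => ⟨(hU i).1.inter (hV i).1, (hU i).2, (hV i).2⟩,
          max i₀ j₀, fun i hi => by
            show U i ∩ V i = Set.univ
            rw [hi₀ i (le_trans (le_max_left _ _) hi), hj₀ i (le_trans (le_max_right _ _) hi)]
            simp⟩, rfl⟩, ?_⟩
      intro f hf
      exact ⟨fun i => (hf i).1, fun i => (hf i).2⟩
    zero' := by
      rintro _ ⟨U, ⟨hU, _⟩, rfl⟩
      intro i
      simpa using (hU i).2
    add' := by
      rintro _ ⟨U, ⟨hU, i₀, hi₀⟩, rfl⟩
      have key : ∀ i, ∃ V : Set E, (IsOpen V ∧ (0 : E) ∈ V ∧ V + V ⊆ U i) ∧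
          (U i = Set.univ → V = Set.univ) := by
        intro i
        by_cases h : U i = Set.univ
        · exact ⟨Set.univ, ⟨isOpen_univ, trivial, by simp [h]⟩, fun _ => rfl⟩
        · obtain ⟨V, hVo, hV0, hVV⟩ :=
            exists_open_nhds_zero_add_subset ((hU i).1.mem_nhds (hU i).2)
          exact ⟨V, ⟨hVo, hV0, hVV⟩, fun h' => absurd h' h⟩
      choose V hV hVuniv using key
      refine ⟨s V, ⟨V, ⟨fun i => ⟨(hV i).1, (hV i).2.1⟩,
        i₀, fun i hi => hVuniv i (hi₀ i hi)⟩, rfl⟩, ?_⟩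
      rintro _ ⟨f, hf, g, hg, rfl⟩
      intro i
      rw [HahnSeries.coeff_add]
      exact (hV i).2.2 (Set.add_mem_add (hf i) (hg i))
    neg' := by
      rintro _ ⟨U, ⟨hU, i₀, hi₀⟩, rfl⟩
      refine ⟨s (fun i => (fun x : E => -x) ⁻¹' U i), ⟨fun i => (fun x : E => -x) ⁻¹' U i,
        ⟨fun i => ⟨(hU i).1.preimage hneg, by simpa using (hU i).2⟩,
          i₀, fun i hi => by simp [hi₀ i hi]⟩, rfl⟩, ?_⟩
      intro f hf i
      have := hf i
      simpa [HahnSeries.coeff_neg] using this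
    conj' := by
      rintro x₀ _ ⟨U, hU, rfl⟩
      exact ⟨s U, ⟨U, hU, rfl⟩, by intro f hf; simpa using hf⟩ }
  refine ⟨B.topology, B.isTopologicalAddGroup, ?_⟩
  have hbasis := B.nhds_zero_hasBasis
  refine hbasis.to_hasBasis ?_ ?_
  · rintro _ ⟨U, hPU, rfl⟩
    exact ⟨U, hPU, subset_rfl⟩
  · intro U hPU
    exact ⟨s U, ⟨U, hPU, rfl⟩, subset_rfl⟩
end

section
/- Let F = 𝔽_p((u))((t)) with its higher topology τ. The complement W in F of the set C = { t^a u^{-c} + t^{-a} u^c : a, c ≥ 1 } is sequentially open but not open for τ; hence τ is strictly coarser than its sequential saturation τ_s, and τ_s is not a linear topology. -/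
open Filter Topology LaurentSeries


open Filter Topology

/-- The element `u` of `𝔽_p((u))`. -/
noncomputable def uElt (p : ℕ) [Fact p.Prime] : LaurentSeries (ZMod p) :=
  HahnSeries.single (1 : ℤ) (1 : ZMod p)

/-- The set `C = { t^a u^{-c} + t^{-a} u^c : a, c ≥ 1 } ⊆ 𝔽_p((u))((t))`. -/
noncomputable def Cset (p : ℕ) [Fact p.Prime] :
    Set (LaurentSeries (LaurentSeries (ZMod p))) :=
  {f | ∃ a c : ℕ, 1 ≤ a ∧ 1 ≤ c ∧
    f = HahnSeries.single (a : ℤ) (uElt p ^ (-(c : ℤ))) +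
        HahnSeries.single (-(a : ℤ)) (uElt p ^ (c : ℤ))}

section Aux

variable (p : ℕ) [Fact p.Prime]

lemma uElt_zpow (z : ℤ) : uElt p ^ z = HahnSeries.single z (1 : ZMod p) :=
  (RatFunc.single_zpow z).symm

lemma uElt_zpow_ne_zero (z : ℤ) : uElt p ^ z ≠ 0 := by
  rw [uElt_zpow]; exact HahnSeries.single_ne_zero one_ne_zero

lemma uElt_zpow_coeff_same (z : ℤ) : (uElt p ^ z).coeff z = 1 := by
  rw [uElt_zpow]; exact HahnSeries.coeff_single_same z 1

/-- valuation of `u^z`. -/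
lemma uElt_val (z : ℤ) : Valued.v (uElt p ^ z) = Multiplicative.ofAdd (-z) := by
  rw [uElt_zpow]; exact LaurentSeries.valuation_single_zpow (K := ZMod p) z

/-- The basic "balls" in `𝔽_p((u))`. -/
def Vset (m : ℤ) : Set (LaurentSeries (ZMod p)) :=
  {g | Valued.v g ≤ (Multiplicative.ofAdd (-m) : Multiplicative ℤ)}

lemma mem_Vset_iff (m : ℤ) (g : LaurentSeries (ZMod p)) :
    g ∈ Vset p m ↔ ∀ j < m, g.coeff j = 0 :=
  valuation_le_iff_coeff_lt_eq_zero (ZMod p)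

lemma zero_mem_Vset (m : ℤ) : (0 : LaurentSeries (ZMod p)) ∈ Vset p m := by
  rw [mem_Vset_iff]; intro j _; simp

lemma isOpen_Vset (m : ℤ) : IsOpen (Vset p m) := by
  rw [isOpen_iff_mem_nhds]
  intro x hx
  rw [Valued.mem_nhds]
  refine ⟨Units.mk0 (Valued.v.restrict (uElt p ^ m)) (fun h => uElt_zpow_ne_zero p m ((Valuation.zero_iff _).mp (by rwa [Valuation.restrict_eq_zero_iff] at h))), fun y hy => ?_⟩
  simp only [Set.mem_setOf_eq, Units.val_mk0, Valuation.restrict_lt_iff, uElt_val] at hy ⊢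
  have : y = (y - x) + x := by ring
  rw [this]
  exact le_trans (Valued.v.map_add _ _) (max_le (le_of_lt hy) hx)

/-- `u^n → 0` in the valuation topology. -/
lemma tendsto_uElt_pow : Tendsto (fun n : ℕ => uElt p ^ (n : ℤ)) atTop
    (𝓝 (0 : LaurentSeries (ZMod p))) := by
  rw [Filter.tendsto_def]
  intro s hs
  obtain ⟨γ, hγ⟩ := Valued.mem_nhds_zero.mp hs
  obtain ⟨g, hg⟩ : ∃ g : Multiplicative ℤ, MonoidWithZeroHom.ValueGroup₀.embedding (γ : MonoidWithZeroHom.ValueGroup₀ (.ofClass (Valued.v (R := LaurentSeries (ZMod p))))) = ((g : Multiplicative ℤ) : WithZero (Multiplicative ℤ)) := by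
    rcases WithZero.ne_zero_iff_exists.mp (show MonoidWithZeroHom.ValueGroup₀.embedding (γ : MonoidWithZeroHom.ValueGroup₀ (.ofClass (Valued.v (R := LaurentSeries (ZMod p))))) ≠ 0 from fun h => γ.ne_zero (MonoidWithZeroHom.ValueGroup₀.embedding_injective (h.trans (map_zero _).symm))) with ⟨g, hg⟩
    exact ⟨g, hg.symm⟩
  rw [Filter.mem_atTop_sets]
  refine ⟨(- Multiplicative.toAdd g).toNat + 1, fun n hn => ?_⟩
  apply Set.mem_preimage.mpr
  apply hγ
  simp only [Set.mem_setOf_eq, Valuation.restrict_lt_iff_lt_embedding, uElt_val, hg, WithZero.coe_lt_coe]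
  rw [show g = Multiplicative.ofAdd (Multiplicative.toAdd g) from rfl]
  rw [Multiplicative.ofAdd_lt]
  have h1 : (- Multiplicative.toAdd g) ≤ ((- Multiplicative.toAdd g).toNat : ℤ) :=
    Int.self_le_toNat _
  have h2 : (((- Multiplicative.toAdd g).toNat + 1 : ℕ) : ℤ) ≤ (n : ℤ) := by exact_mod_cast hn
  push_cast at h2
  omega

/-- Coefficients of a Hahn series over `ℤ` vanish at very negative indices. -/
lemma eventually_coeff_neg_zero {V : Type*} [Zero V]
    (x : HahnSeries ℤ V) : ∃ B : ℕ, ∀ n : ℕ, B ≤ n → x.coeff (-(n : ℤ)) = 0 := by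
  by_cases hx : x = 0
  · exact ⟨0, fun n _ => by simp [hx]⟩
  · refine ⟨(1 - x.order).toNat, fun n hn => ?_⟩
    apply HahnSeries.coeff_eq_zero_of_lt_order
    have h1 : (1 - x.order) ≤ ((1 - x.order).toNat : ℤ) := Int.self_le_toNat _
    have h2 : ((1 - x.order).toNat : ℤ) ≤ (n : ℤ) := by exact_mod_cast hn
    omega


/-- The generic element of `C`. -/
noncomputable def celt (a c : ℕ) : LaurentSeries (LaurentSeries (ZMod p)) :=
  HahnSeries.single (a : ℤ) (uElt p ^ (-(c : ℤ))) +
    HahnSeries.single (-(a : ℤ)) (uElt p ^ (c : ℤ))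

lemma celt_mem (a c : ℕ) (ha : 1 ≤ a) (hc : 1 ≤ c) : celt p a c ∈ Cset p :=
  ⟨a, c, ha, hc, rfl⟩

lemma celt_coeff_pos (a c : ℕ) (ha : 1 ≤ a) :
    (celt p a c).coeff (a : ℤ) = uElt p ^ (-(c : ℤ)) := by
  have hne : -(a : ℤ) ≠ (a : ℤ) := by omega
  simp [celt, HahnSeries.coeff_add, HahnSeries.coeff_single_same,
    HahnSeries.coeff_single_of_ne (a := -(a:ℤ)) (b := (a:ℤ)) hne.symm]

lemma celt_coeff_neg (a c : ℕ) (ha : 1 ≤ a) :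
    (celt p a c).coeff (-(a : ℤ)) = uElt p ^ ((c : ℤ)) := by
  have hne : -(a : ℤ) ≠ (a : ℤ) := by omega
  simp [celt, HahnSeries.coeff_add, HahnSeries.coeff_single_same,
    HahnSeries.coeff_single_of_ne (a := (a:ℤ)) (b := -(a:ℤ)) hne]

lemma celt_coeff_other (a c : ℕ) (i : ℤ) (h1 : i ≠ (a : ℤ)) (h2 : i ≠ -(a : ℤ)) :
    (celt p a c).coeff i = 0 := by
  simp [celt, HahnSeries.coeff_add, HahnSeries.coeff_single_of_ne h1,
    HahnSeries.coeff_single_of_ne h2]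

lemma mem_Cset_ne_zero {f : LaurentSeries (LaurentSeries (ZMod p))} (hf : f ∈ Cset p) :
    f ≠ 0 := by
  obtain ⟨a, c, ha, hc, rfl⟩ := hf
  intro h
  have := congrArg (fun g => HahnSeries.coeff g (a : ℤ)) h
  rw [show (HahnSeries.single (a : ℤ) (uElt p ^ (-(c : ℤ))) +
        HahnSeries.single (-(a : ℤ)) (uElt p ^ (c : ℤ))) = celt p a c from rfl] at this
  simp only [celt_coeff_pos p a c ha, HahnSeries.coeff_zero] at this
  exact uElt_zpow_ne_zero p _ this

lemma zero_not_mem_Cset : (0 : LaurentSeries (LaurentSeries (ZMod p))) ∉ Cset p :=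
  fun h => mem_Cset_ne_zero p h rfl

lemma pigeon {S : Set ℕ} (hS : S.Infinite) (f : ℕ → ℕ) (hf : (f '' S).Finite) :
    ∃ C, {k | k ∈ S ∧ f k = C}.Infinite := by
  by_contra h
  push_neg at h
  apply hS
  have hsub : S ⊆ ⋃ C ∈ f '' S, {k | k ∈ S ∧ f k = C} := fun k hk =>
    Set.mem_biUnion (Set.mem_image_of_mem f hk) ⟨hk, rfl⟩
  exact (hf.biUnion (fun C _ => h C)).subset hsub

lemma exists_big {S : Set ℕ} (hS : S.Infinite) {w : ℕ → ℕ} (hw : Set.InjOn w S)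
    (B N : ℕ) : ∃ v ∈ S, B ≤ v ∧ N ≤ w v := by
  have hfin : ((S ∩ Set.Iio B) ∪ (S ∩ w ⁻¹' Set.Iio N)).Finite := by
    apply Set.Finite.union
    · exact (Set.finite_Iio B).subset Set.inter_subset_right
    · apply Set.Finite.of_finite_image ((Set.finite_Iio N).subset ?_)
        (hw.mono Set.inter_subset_left)
      rintro m ⟨k, hk, rfl⟩
      exact hk.2
  obtain ⟨v, hv⟩ := (hS.diff hfin).nonempty
  refine ⟨v, hv.1, ?_, ?_⟩ <;>
  · have := hv.2
    simp only [Set.mem_union, Set.mem_inter_iff, Set.mem_Iio, Set.mem_preimage, not_or,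
      not_and, not_lt] at this
    first
      | exact this.1 hv.1
      | exact this.2 hv.1


variable (τ : TopologicalSpace (LaurentSeries (LaurentSeries (ZMod p))))
  (hbasis : (@nhds (LaurentSeries (LaurentSeries (ZMod p))) τ 0).HasBasis
      (fun U : ℤ → Set (LaurentSeries (ZMod p)) =>
        (∀ i, IsOpen (U i) ∧ (0 : LaurentSeries (ZMod p)) ∈ U i) ∧
          ∃ i₀ : ℤ, ∀ i ≥ i₀, U i = Set.univ)
      (fun U => {f : LaurentSeries (LaurentSeries (ZMod p)) | ∀ i, f.coeff i ∈ U i}))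

include hbasis

lemma tendsto_single_pos (g : ℕ → LaurentSeries (ZMod p)) :
    Tendsto (fun n : ℕ => (HahnSeries.single ((n : ℤ)) (g n) :
      LaurentSeries (LaurentSeries (ZMod p)))) atTop (@nhds _ τ 0) := by
  rw [hbasis.tendsto_right_iff]
  rintro U ⟨h1, i₀, h2⟩
  filter_upwards [Filter.eventually_ge_atTop (i₀.toNat)] with n hn
  intro i
  by_cases hi : i = (n : ℤ)
  · have : U i = Set.univ := h2 i (by subst hi; calc i₀ ≤ (i₀.toNat : ℤ) := Int.self_le_toNat _
      _ ≤ (n : ℤ) := by exact_mod_cast hn)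
    simp [this]
  · rw [HahnSeries.coeff_single_of_ne hi]
    exact (h1 i).2

lemma tendsto_single_neg (a : ℕ) :
    Tendsto (fun n : ℕ => (HahnSeries.single (-(a : ℤ)) (uElt p ^ (n : ℤ)) :
      LaurentSeries (LaurentSeries (ZMod p)))) atTop (@nhds _ τ 0) := by
  rw [hbasis.tendsto_right_iff]
  rintro U ⟨h1, i₀, h2⟩
  have hU : U (-(a : ℤ)) ∈ 𝓝 (0 : LaurentSeries (ZMod p)) :=
    (h1 _).1.mem_nhds (h1 _).2
  filter_upwards [(tendsto_uElt_pow p).eventually_mem hU] with n hn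
  intro i
  by_cases hi : i = -(a : ℤ)
  · subst hi; rw [HahnSeries.coeff_single_same]; exact hn
  · rw [HahnSeries.coeff_single_of_ne hi]
    exact (h1 i).2

lemma key (x : LaurentSeries (LaurentSeries (ZMod p))) (hx : x ∉ Cset p)
    (y : ℕ → LaurentSeries (LaurentSeries (ZMod p))) (hy : ∀ k, y k ∈ Cset p)
    (hconv : Tendsto (fun k => y k - x) atTop (@nhds _ τ 0)) : False := by
  simp only [Cset, Set.mem_setOf_eq] at hy
  choose a c ha hc hyk using hy
  have hyc : ∀ k, y k = celt p (a k) (c k) := hyk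
  have hconv' : ∀ U : ℤ → Set (LaurentSeries (ZMod p)),
      ((∀ i, IsOpen (U i) ∧ (0 : LaurentSeries (ZMod p)) ∈ U i) ∧
        ∃ i₀ : ℤ, ∀ i ≥ i₀, U i = Set.univ) →
      ∃ N, ∀ k ≥ N, ∀ i, (y k - x).coeff i ∈ U i := by
    intro U hU
    have := (hbasis.tendsto_right_iff.mp hconv) U hU
    rw [Filter.eventually_atTop] at this
    exact this
  by_cases hA : (Set.range a).Infinite
  · -- Case A : infinitely many values of `a`.
    obtain ⟨B, hB⟩ := eventually_coeff_neg_zero x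
    have hw : ∀ A ∈ Set.range a, ∃ k, a k = A := fun A hA => hA
    choose! w hwa using hw
    set U : ℤ → Set (LaurentSeries (ZMod p)) := fun i =>
      if i < 0 then Vset p ((c (w ((-i).toNat)) : ℤ) + 1) else Set.univ with hUdef
    have hpred : (∀ i, IsOpen (U i) ∧ (0 : LaurentSeries (ZMod p)) ∈ U i) ∧
        ∃ i₀ : ℤ, ∀ i ≥ i₀, U i = Set.univ := by
      constructor
      · intro i
        by_cases hi : i < 0 <;>
          simp [hUdef, hi, isOpen_Vset, zero_mem_Vset]
      · exact ⟨0, fun i hi => by simp [hUdef, not_lt.mpr hi]⟩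
    obtain ⟨N, hN⟩ := hconv' U hpred
    have hinj : Set.InjOn w (Set.range a) := fun A1 h1 A2 h2 he => by
      rw [← hwa A1 h1, ← hwa A2 h2, he]
    obtain ⟨A, hAmem, hAB, hAN⟩ := exists_big hA hinj (max B 1) N
    have hak : a (w A) = A := hwa A hAmem
    have hA1 : 1 ≤ A := le_trans (le_max_right _ _) hAB
    have h1 : (y (w A) - x).coeff (-(A : ℤ)) ∈ U (-(A : ℤ)) := hN (w A) hAN _
    have hAneg : -(A : ℤ) < 0 := by omega
    rw [hUdef] at h1
    simp only [if_pos hAneg, neg_neg, Int.toNat_natCast] at h1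
    have hcoeff : (y (w A) - x).coeff (-(A : ℤ)) = uElt p ^ ((c (w A) : ℤ)) := by
      rw [HahnSeries.coeff_sub]
      have : (y (w A)).coeff (-(A : ℤ)) = uElt p ^ ((c (w A) : ℤ)) := by
        rw [hyc (w A), hak]
        exact celt_coeff_neg p A (c (w A)) hA1
      rw [this, hB A (le_trans (le_max_left _ _) hAB), sub_zero]
    rw [hcoeff, mem_Vset_iff] at h1
    have := h1 (c (w A)) (by omega)
    rw [uElt_zpow_coeff_same] at this
    exact one_ne_zero this
  · -- Case B : finitely many values of `a`.
    rw [Set.not_infinite] at hA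
    obtain ⟨A, hKa⟩ := pigeon Set.infinite_univ a (by rwa [Set.image_univ])
    simp only [Set.mem_univ, true_and] at hKa
    obtain ⟨k0, hk0⟩ := hKa.nonempty
    have hA1 : 1 ≤ A := hk0 ▸ ha k0
    by_cases hC : (c '' {k | a k = A}).Infinite
    · -- Case B2 : `a` constant `A` along infinitely many `c`-values.
      obtain ⟨B, hB⟩ := eventually_coeff_neg_zero (x.coeff (A : ℤ))
      have hw : ∀ C ∈ c '' {k | a k = A}, ∃ k, a k = A ∧ c k = C := by
        rintro C ⟨k, hk, rfl⟩; exact ⟨k, hk, rfl⟩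
      choose! w hwa hwc using hw
      set U : ℤ → Set (LaurentSeries (ZMod p)) := fun i =>
        if i = (A : ℤ) then Vset p 0 else Set.univ with hUdef
      have hpred : (∀ i, IsOpen (U i) ∧ (0 : LaurentSeries (ZMod p)) ∈ U i) ∧
          ∃ i₀ : ℤ, ∀ i ≥ i₀, U i = Set.univ := by
        constructor
        · intro i
          by_cases hi : i = (A : ℤ) <;>
            simp [hUdef, hi, isOpen_Vset, zero_mem_Vset]
        · exact ⟨(A : ℤ) + 1, fun i hi => by
            have : i ≠ (A : ℤ) := by omega
            simp [hUdef, this]⟩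
      obtain ⟨N, hN⟩ := hconv' U hpred
      have hinj : Set.InjOn w (c '' {k | a k = A}) := fun C1 h1 C2 h2 he => by
        rw [← hwc C1 h1, ← hwc C2 h2, he]
      obtain ⟨C, hCmem, hCB, hCN⟩ := exists_big hC hinj (max B 1) N
      have hak : a (w C) = A := hwa C hCmem
      have hck : c (w C) = C := hwc C hCmem
      have hC1 : 1 ≤ C := le_trans (le_max_right _ _) hCB
      have h1 : (y (w C) - x).coeff ((A : ℤ)) ∈ U ((A : ℤ)) := hN (w C) hCN _
      rw [hUdef] at h1
      simp only [if_pos rfl, if_true] at h1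
      rw [mem_Vset_iff] at h1
      have h2 := h1 (-(C : ℤ)) (by omega)
      have hcoeff : (y (w C) - x).coeff ((A : ℤ)) =
          uElt p ^ (-(C : ℤ)) - x.coeff (A : ℤ) := by
        rw [HahnSeries.coeff_sub]
        congr 1
        rw [hyc (w C), hak, hck]
        exact celt_coeff_pos p A C hA1
      rw [hcoeff, HahnSeries.coeff_sub] at h2
      rw [uElt_zpow_coeff_same, hB C (le_trans (le_max_left _ _) hCB), sub_zero] at h2
      exact one_ne_zero h2
    · -- Case B1 : a constant pair `(A, C)` occurs infinitely often.
      rw [Set.not_infinite] at hC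
      obtain ⟨C, hKc⟩ := pigeon hKa c hC
      obtain ⟨k1, hk1⟩ := hKc.nonempty
      have hC1 : 1 ≤ C := hk1.2 ▸ hc k1
      have hvmem : celt p A C ∈ Cset p := celt_mem p A C hA1 hC1
      have hd : celt p A C - x ≠ 0 := by
        intro h
        exact hx (sub_eq_zero.mp h ▸ hvmem)
      obtain ⟨i, hi⟩ : ∃ i, (celt p A C - x).coeff i ≠ 0 := by
        by_contra h
        push_neg at h
        exact hd (HahnSeries.ext (funext h))
      obtain ⟨j, hj⟩ : ∃ j, ((celt p A C - x).coeff i).coeff j ≠ 0 := by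
        by_contra h
        push_neg at h
        exact hi (HahnSeries.ext (funext h))
      set U : ℤ → Set (LaurentSeries (ZMod p)) := fun i' =>
        if i' = i then Vset p (j + 1) else Set.univ with hUdef
      have hpred : (∀ i, IsOpen (U i) ∧ (0 : LaurentSeries (ZMod p)) ∈ U i) ∧
          ∃ i₀ : ℤ, ∀ i ≥ i₀, U i = Set.univ := by
        constructor
        · intro i'
          by_cases hi' : i' = i <;>
            simp [hUdef, hi', isOpen_Vset, zero_mem_Vset]
        · exact ⟨i + 1, fun i' hi' => by
            have : i' ≠ i := by omega
            simp [hUdef, this]⟩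
      obtain ⟨N, hN⟩ := hconv' U hpred
      obtain ⟨k, hk⟩ := (hKc.diff (Set.finite_Iio N)).nonempty
      have hkN : N ≤ k := not_lt.mp (fun h => hk.2 h)
      have h1 : (y k - x).coeff i ∈ U i := hN k hkN i
      rw [hUdef] at h1
      simp only [if_pos rfl, if_true] at h1
      have hyv : y k = celt p A C := by
        rw [hyc k, hk.1.2, hk.1.1]
      rw [hyv, mem_Vset_iff] at h1
      exact hj (h1 j (by omega))


end Aux

/-- Let `F = 𝔽_p((u))((t))` with a higher topology `τ` (a group topology whose
neighbourhoods of zero have as a basis the sets `{ Σ fᵢ tⁱ : fᵢ ∈ Uᵢ }`, where the `Uᵢ`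
are open neighbourhoods of zero in the valuation topology of `𝔽_p((u))` with
`Uᵢ = 𝔽_p((u))` for large `i`).  The complement `W` of
`C = { t^a u^{-c} + t^{-a} u^c : a, c ≥ 1 }` is sequentially open but not open for `τ`;
hence `τ` is strictly coarser than its sequential saturation `τ_s`, and `τ_s` is not a
linear topology (not every `τ_s`-neighbourhood of `0` contains a `τ_s`-open subgroup). -/
theorem higher_topology_not_sequentially_saturated_and_not_linear (p : ℕ)
    [Fact p.Prime] (τ : TopologicalSpace (LaurentSeries (LaurentSeries (ZMod p))))
    (hgrp : @IsTopologicalAddGroup (LaurentSeries (LaurentSeries (ZMod p))) τ _)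
    (hbasis : (@nhds (LaurentSeries (LaurentSeries (ZMod p))) τ 0).HasBasis
      (fun U : ℤ → Set (LaurentSeries (ZMod p)) =>
        (∀ i, IsOpen (U i) ∧ (0 : LaurentSeries (ZMod p)) ∈ U i) ∧
          ∃ i₀ : ℤ, ∀ i ≥ i₀, U i = Set.univ)
      (fun U => {f : LaurentSeries (LaurentSeries (ZMod p)) | ∀ i, f.coeff i ∈ U i})) :
    @SeqOpen _ τ (Cset p)ᶜ ∧ ¬ @IsOpen _ τ (Cset p)ᶜ ∧ seqSaturation τ < τ ∧
    ¬ (∀ S : Set (LaurentSeries (LaurentSeries (ZMod p))),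
        @IsOpen _ (seqSaturation τ) S → (0 : LaurentSeries (LaurentSeries (ZMod p))) ∈ S →
        ∃ H : AddSubgroup (LaurentSeries (LaurentSeries (ZMod p))),
          (H : Set (LaurentSeries (LaurentSeries (ZMod p)))) ⊆ S ∧
          @IsOpen _ (seqSaturation τ) (H : Set (LaurentSeries (LaurentSeries (ZMod p))))) := by
  letI := τ
  haveI := hgrp
  have part1 : @SeqOpen _ τ (Cset p)ᶜ := by
    intro x hx u hu
    by_contra h
    have hfreq : ∃ᶠ n in atTop, u n ∈ Cset p := by
      rw [Filter.not_eventually] at h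
      exact h.mono (fun n hn => by simpa using hn)
    obtain ⟨φ, hφ, hmem⟩ := Filter.extraction_of_frequently_atTop hfreq
    have hconv : Tendsto (fun k => u (φ k)) atTop (𝓝 x) := hu.comp hφ.tendsto_atTop
    have hsub : Tendsto (fun k => u (φ k) - x) atTop (𝓝 0) := by
      simpa using hconv.sub_const x
    exact key p τ hbasis x hx _ hmem hsub
  have part1' : @IsOpen _ (seqSaturation τ) (Cset p)ᶜ := part1
  have part2 : ¬ @IsOpen _ τ (Cset p)ᶜ := by
    intro hop
    have hmem : (Cset p)ᶜ ∈ 𝓝 (0 : LaurentSeries (LaurentSeries (ZMod p))) :=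
      hop.mem_nhds (zero_not_mem_Cset p)
    rw [hbasis.mem_iff] at hmem
    obtain ⟨U, ⟨h1, i₀, h2⟩, hsub⟩ := hmem
    set a : ℕ := i₀.toNat + 1 with hadef
    have ha1 : 1 ≤ a := Nat.le_add_left 1 _
    have hai : ((a : ℤ)) ≥ i₀ := by
      have := Int.self_le_toNat i₀
      have h2' : ((a : ℤ)) = (i₀.toNat : ℤ) + 1 := by rw [hadef]; push_cast; ring
      omega
    have hU : U (-(a : ℤ)) ∈ 𝓝 (0 : LaurentSeries (ZMod p)) := (h1 _).1.mem_nhds (h1 _).2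
    have hev := (tendsto_uElt_pow p).eventually_mem hU
    rw [eventually_atTop] at hev
    obtain ⟨N, hN⟩ := hev
    set cc := max N 1 with hccdef
    have hmemU : uElt p ^ ((cc : ℤ)) ∈ U (-(a : ℤ)) := hN cc (le_max_left _ _)
    have hbase : celt p a cc ∈ {f : LaurentSeries (LaurentSeries (ZMod p)) |
        ∀ i, f.coeff i ∈ U i} := by
      intro i
      by_cases h : i = (a : ℤ)
      · subst h
        rw [h2 _ hai]
        exact Set.mem_univ _
      · by_cases h' : i = -(a : ℤ)
        · subst h'
          rw [celt_coeff_neg p a cc ha1]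
          exact hmemU
        · rw [celt_coeff_other p a cc i h h']
          exact (h1 i).2
    exact (hsub hbase) (celt_mem p a cc ha1 (le_max_right _ _))
  refine ⟨part1, part2, ?_, ?_⟩
  · have hle : seqSaturation τ ≤ τ := by
      rw [TopologicalSpace.le_def]
      intro s hs
      intro x hxs u hu
      exact hu.eventually_mem (hs.mem_nhds hxs)
    exact lt_of_le_of_ne hle (fun he => part2 (he ▸ part1'))
  · intro hlin
    obtain ⟨H, hHsub, hHopen⟩ := hlin (Cset p)ᶜ part1' (zero_not_mem_Cset p)
    have hHseq : @SeqOpen _ τ (H : Set (LaurentSeries (LaurentSeries (ZMod p)))) := hHopen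
    have hstep1 : ∀ n : ℕ, ∃ m : ℕ, 1 ≤ m ∧
        (HahnSeries.single (-(n : ℤ)) (uElt p ^ ((m : ℤ))) :
          LaurentSeries (LaurentSeries (ZMod p))) ∈ H := by
      intro n
      have hev := hHseq H.zero_mem _ (tendsto_single_neg p τ hbasis n)
      rw [eventually_atTop] at hev
      obtain ⟨N, hN⟩ := hev
      exact ⟨max N 1, le_max_right _ _, hN _ (le_max_left _ _)⟩
    choose g hg1 hgmem using hstep1
    have hstep2 := hHseq H.zero_mem _
      (tendsto_single_pos p τ hbasis (fun n => uElt p ^ (-(g n : ℤ))))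
    rw [eventually_atTop] at hstep2
    obtain ⟨N, hN⟩ := hstep2
    set a := max N 1 with hadef
    have hmem1 : (HahnSeries.single ((a : ℤ)) (uElt p ^ (-(g a : ℤ))) :
        LaurentSeries (LaurentSeries (ZMod p))) ∈ H := hN a (le_max_left _ _)
    have hsum : celt p a (g a) ∈ H := H.add_mem hmem1 (hgmem a)
    exact (hHsub hsum) (celt_mem p a (g a) (le_max_right _ _) (hg1 a))
end
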